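/- Let m ≥ 1, let (U_j)_{j∈[1:m]} and Y be finite-valued random variables, and for each j ∈ [1:m] let A_j ⊆ [1:j-1]. For any nonempty S ⊆ [1:m]: ∑_{j∈S} H(U_j | U_{A_j}) − H(U_S | U_{S^c}, Y) = ∑_{j∈S} I(U_j ; U_{S[j] ∪ S^c}, Y | U_{A_j}), provided A_j ⊆ S[j] ∪ S^c for every j ∈ S. -/

import Mathlib

open Finset

/-- A probability mass function on a finite sample space. -/
structure FinProb (Ω : Type) [Fintype Ω ] where
  p : Ω → ℝ
  nonneg : ∀ ω, 0 ≤ p ω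
  sum_one : ∑ ω, p ω = 1

variable {Ω : Type} [Fintype Ω]

/-- `P(X = x)`. -/
noncomputable def probOf (μ : FinProb Ω) {α : Type} [DecidableEq α] (X : Ω → α) (x : α) : ℝ :=
  ∑ ω ∈ Finset.univ.filter (fun ω => X ω = x), μ.p ω

/-- Shannon entropy `H(X)` of a finite-valued random variable. -/
noncomputable def Hent (μ : FinProb Ω) {α : Type} [Fintype α] [DecidableEq α] (X : Ω → α) : ℝ :=
  ∑ x : α, Real.negMulLog (probOf μ X x)

/-- Conditional entropy `H(X | Y)`. -/
noncomputable def Hcond (μ : FinProb Ω) {α β : Type} [Fintype α] [DecidableEq α]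
    [Fintype β] [DecidableEq β] (X : Ω → α) (Y : Ω → β) : ℝ :=
  Hent μ (fun ω => (X ω, Y ω)) - Hent μ Y

/-- Mutual information `I(X ; Y)`. -/
noncomputable def MI (μ : FinProb Ω) {α β : Type} [Fintype α] [DecidableEq α]
    [Fintype β] [DecidableEq β] (X : Ω → α) (Y : Ω → β) : ℝ :=
  Hent μ X + Hent μ Y - Hent μ (fun ω => (X ω, Y ω))

/-- Conditional mutual information `I(X ; Y | Z)`. -/
noncomputable def CMI (μ : FinProb Ω) {α β γ : Type} [Fintype α] [DecidableEq α]
    [Fintype β] [DecidableEq β] [Fintype γ] [DecidableEq γ]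
    (X : Ω → α) (Y : Ω → β) (Z : Ω → γ) : ℝ :=
  Hcond μ X Z + Hcond μ Y Z - Hcond μ (fun ω => (X ω, Y ω)) Z

/-- The tuple random variable `U_T = (U_i : i ∈ T)`. -/
def tupleOn {m : ℕ} {α : Fin m → Type} (U : ∀ i, Ω → α i) (T : Finset (Fin m)) :
    Ω → (∀ i : {i // i ∈ T}, α i.1) := fun ω i => U i.1 ω


lemma probOf_comp {α β : Type} [DecidableEq α] [DecidableEq β] (μ : FinProb Ω)
    (X : Ω → α) (f : α → β) (hf : Function.Injective f) (x : α) :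
    probOf μ (fun ω => f (X ω)) (f x) = probOf μ X x := by
  unfold probOf
  apply Finset.sum_congr _ (fun _ _ => rfl)
  ext ω
  simp [hf.eq_iff]

lemma Hent_comp (μ : FinProb Ω) {α β : Type} [Fintype α] [DecidableEq α]
    [Fintype β] [DecidableEq β] (X : Ω → α) (f : α → β) (hf : Function.Injective f) :
    Hent μ (fun ω => f (X ω)) = Hent μ X := by
  unfold Hent
  have h1 : ∑ x : α, Real.negMulLog (probOf μ X x)
      = ∑ y ∈ Finset.univ.image f, Real.negMulLog (probOf μ (fun ω => f (X ω)) y) := by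
    rw [Finset.sum_image (fun x _ y _ h => hf h)]
    exact Finset.sum_congr rfl (fun x _ => by rw [probOf_comp μ X f hf x])
  rw [h1]
  symm
  apply Finset.sum_subset (Finset.subset_univ _)
  intro y _ hy
  have : probOf μ (fun ω => f (X ω)) y = 0 := by
    unfold probOf
    rw [Finset.filter_false_of_mem, Finset.sum_empty]
    intro ω _ h
    exact hy (Finset.mem_image.mpr ⟨X ω, Finset.mem_univ _, h⟩)
  rw [this, Real.negMulLog_zero]

lemma tele {m : ℕ} (E : Finset (Fin m) → ℝ) (C : Finset (Fin m)) (S : Finset (Fin m)) :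
    ∑ j ∈ S, (E (S.filter (· < j) ∪ C) - E (insert j (S.filter (· < j) ∪ C)))
      = E C - E (S ∪ C) := by
  induction S using Finset.induction_on_max with
  | empty => simp
  | insert a s ha ih =>
    rw [Finset.sum_insert (fun h => absurd (ha a h) (lt_irrefl a))]
    have h1 : ∀ j ∈ s, (insert a s).filter (· < j) = s.filter (· < j) := by
      intro j hj
      rw [Finset.filter_insert, if_neg (not_lt.mpr (le_of_lt (ha j hj)))]
    have h2 : (insert a s).filter (· < a) = s := by
      rw [Finset.filter_insert, if_neg (lt_irrefl a),
        Finset.filter_true_of_mem (fun x hx => ha x hx)]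
    rw [Finset.sum_congr rfl (fun j hj => by rw [h1 j hj]), h2, ih, Finset.insert_union]
    ring

set_option maxHeartbeats 2000000 in
theorem stmt13 (μ : FinProb Ω) {m : ℕ} (hm : 1 ≤ m) {α : Fin m → Type}
    [∀ i, Fintype (α i)] [∀ i, DecidableEq (α i)]
    {β : Type} [Fintype β] [DecidableEq β]
    (U : ∀ i, Ω → α i) (Y : Ω → β) (A : Fin m → Finset (Fin m))
    (hAj : ∀ j : Fin m, ∀ i ∈ A j, i < j)
    (S : Finset (Fin m)) (hS : S.Nonempty)
    (hAS : ∀ j ∈ S, A j ⊆ S.filter (· < j) ∪ Sᶜ) :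
    (∑ j ∈ S, Hcond μ (U j) (tupleOn U (A j)))
        - Hcond μ (tupleOn U S) (fun ω => (tupleOn U Sᶜ ω, Y ω))
      = ∑ j ∈ S, CMI μ (U j)
          (fun ω => (tupleOn U (S.filter (· < j) ∪ Sᶜ) ω, Y ω)) (tupleOn U (A j)) := by

  set E : Finset (Fin m) → ℝ := fun T => Hent μ (fun ω => (tupleOn U T ω, Y ω)) with hE
  -- Claim C : H(U_S, (U_{Sᶜ}, Y)) = E univ
  have hCuniv : Hent μ (fun ω => (tupleOn U S ω, (tupleOn U Sᶜ ω, Y ω))) = E Finset.univ := by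
    have hinj : Function.Injective
        (fun v : ((∀ i : {i // i ∈ (Finset.univ : Finset (Fin m))}, α i.1) × β) =>
          ((fun i : {i // i ∈ S} => v.1 ⟨i.1, Finset.mem_univ _⟩),
           ((fun i : {i // i ∈ Sᶜ} => v.1 ⟨i.1, Finset.mem_univ _⟩), v.2))) := by
      intro a b h
      have hS1 := congrArg Prod.fst h
      have hS2 := congrArg (fun z => z.2.1) h
      have hy := congrArg (fun z => z.2.2) h
      refine Prod.ext ?_ hy
      funext i
      by_cases hi : i.1 ∈ S
      · exact congrFun hS1 ⟨i.1, hi⟩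
      · exact congrFun hS2 ⟨i.1, Finset.mem_compl.mpr hi⟩
    exact Hent_comp μ (fun ω => (tupleOn U (Finset.univ : Finset (Fin m)) ω, Y ω))
      (fun v : ((∀ i : {i // i ∈ (Finset.univ : Finset (Fin m))}, α i.1) × β) =>
        ((fun i : {i // i ∈ S} => v.1 ⟨i.1, Finset.mem_univ _⟩),
         ((fun i : {i // i ∈ Sᶜ} => v.1 ⟨i.1, Finset.mem_univ _⟩), v.2))) hinj
  have hHcond : Hcond μ (tupleOn U S) (fun ω => (tupleOn U Sᶜ ω, Y ω))
      = E Finset.univ - E Sᶜ := by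
    unfold Hcond
    rw [hCuniv]
  -- per-term rewriting of CMI
  have hterm : ∀ j ∈ S, CMI μ (U j)
      (fun ω => (tupleOn U (S.filter (· < j) ∪ Sᶜ) ω, Y ω)) (tupleOn U (A j))
      = Hcond μ (U j) (tupleOn U (A j))
        + (E (S.filter (· < j) ∪ Sᶜ) - E (insert j (S.filter (· < j) ∪ Sᶜ))) := by
    intro j hj
    have hsub : A j ⊆ S.filter (· < j) ∪ Sᶜ := hAS j hj
    set T := S.filter (· < j) ∪ Sᶜ with hT
    -- Claim A
    have hA' : Hent μ (fun ω => ((tupleOn U T ω, Y ω), tupleOn U (A j) ω)) = E T := by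
      exact Hent_comp μ (fun ω => (tupleOn U T ω, Y ω))
        (fun v : ((∀ i : {i // i ∈ T}, α i.1) × β) =>
          (v, fun i : {i // i ∈ A j} => v.1 ⟨i.1, hsub i.2⟩))
        (fun a b h => congrArg Prod.fst h)
    -- Claim B
    have hB : Hent μ (fun ω => ((U j ω, (tupleOn U T ω, Y ω)), tupleOn U (A j) ω))
        = E (insert j T) := by
      have hinj : Function.Injective
          (fun v : ((∀ i : {i // i ∈ insert j T}, α i.1) × β) =>
            ((v.1 ⟨j, Finset.mem_insert_self j T⟩,
              ((fun i : {i // i ∈ T} => v.1 ⟨i.1, Finset.mem_insert_of_mem i.2⟩), v.2)),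
             fun i : {i // i ∈ A j} => v.1 ⟨i.1, Finset.mem_insert_of_mem (hsub i.2)⟩)) := by
        intro a b h
        have h1 := congrArg (fun z => z.1.1) h
        have h2 := congrArg (fun z => z.1.2.1) h
        have hy := congrArg (fun z => z.1.2.2) h
        refine Prod.ext ?_ hy
        funext i
        rcases Finset.mem_insert.mp i.2 with h' | h'
        · have hi : i = ⟨j, Finset.mem_insert_self j T⟩ := Subtype.ext h'
          rw [hi]; exact h1
        · exact congrFun h2 ⟨i.1, h'⟩
      exact Hent_comp μ (fun ω => (tupleOn U (insert j T) ω, Y ω))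
        (fun v : ((∀ i : {i // i ∈ insert j T}, α i.1) × β) =>
          ((v.1 ⟨j, Finset.mem_insert_self j T⟩,
            ((fun i : {i // i ∈ T} => v.1 ⟨i.1, Finset.mem_insert_of_mem i.2⟩), v.2)),
           fun i : {i // i ∈ A j} => v.1 ⟨i.1, Finset.mem_insert_of_mem (hsub i.2)⟩)) hinj
    unfold CMI Hcond
    rw [hA', hB]
    ring
  rw [Finset.sum_congr rfl hterm, Finset.sum_add_distrib, hHcond, tele E Sᶜ S,
    Finset.union_compl]
  ring
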